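/- arXiv:math/0605646 — 7 statements merged into one kernel-verified Lean document; each statement's English description precedes it below -/
import Mathlib

section
/- Every tournament on a finite vertex set has a vertex v whose second out-neighborhood is at least as large as its first out-neighborhood: |N₂⁺(v)| ≥ |N⁺(v)|. -/
namespace SNPaux
open List
set_option linter.unusedSectionVars false

variable {V : Type*} [DecidableEq V] (E : V → V → Prop) [DecidableRel E]

def wt : List V → ℕ
  | [] => 0
  | a :: t => t.countP (fun b => decide (E a b)) + wt t

def cross : List V → List V → ℕ
  | [], _ => 0
  | a :: X, Y => Y.countP (fun b => decide (E a b)) + cross X Y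

lemma cross_append_right (X Y Z : List V) :
    cross E X (Y ++ Z) = cross E X Y + cross E X Z := by
  induction X with
  | nil => simp [cross]
  | cons a X ih => simp [cross, List.countP_append, ih]; omega

lemma cross_singleton (b : V) (X : List V) :
    cross E X [b] = X.countP (fun a => decide (E a b)) := by
  induction X with
  | nil => simp [cross]
  | cons a X ih =>
    simp [cross, List.countP_cons, ih]
    omega

lemma cross_append_left (X Y Z : List V) :
    cross E (X ++ Y) Z = cross E X Z + cross E Y Z := by
  induction X with
  | nil => simp [cross]
  | cons a X ih => simp [cross, ih]; omega

lemma wt_append (X Y : List V) : wt E (X ++ Y) = wt E X + cross E X Y + wt E Y := by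
  induction X with
  | nil => simp [wt, cross]
  | cons a X ih => simp [wt, cross, List.countP_append, ih]; omega

lemma feed {l : List V} (hm : ∀ l', l' ~ l → wt E l' ≤ wt E l)
    {A I C : List V} {b : V} (h : l = A ++ (I ++ b :: C)) :
    I.countP (fun a => decide (E b a)) ≤ I.countP (fun a => decide (E a b)) := by
  have hperm : (A ++ (b :: (I ++ C))) ~ l := by
    rw [h]
    exact List.Perm.append_left A List.perm_middle.symm
  have hle := hm _ hperm
  rw [h] at hle
  have e1 : A ++ (I ++ b :: C) = A ++ (I ++ ([b] ++ C)) := rfl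
  have e2 : A ++ (b :: (I ++ C)) = A ++ ([b] ++ (I ++ C)) := rfl
  rw [e1, ← List.append_assoc, ← List.append_assoc] at hle
  rw [e2, ← List.append_assoc] at hle
  simp only [wt_append, cross_append_right, cross_append_left, cross_singleton] at hle
  simp only [cross, wt, List.countP_nil, List.countP_append, Nat.add_zero, Nat.zero_add] at hle
  omega


variable [Fintype V]

lemma dropWhile_head_false {α : Type*} (p : α → Bool) :
    ∀ (l : List α) {b : α} {C : List α}, l.dropWhile p = b :: C → p b = false := by
  intro l
  induction l with
  | nil => intro b C h; simp [List.dropWhile] at h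
  | cons a t ih =>
    intro b C h
    rw [List.dropWhile_cons] at h
    by_cases hpa : p a
    · rw [if_pos hpa] at h; exact ih h
    · rw [if_neg hpa] at h
      injection h with h1 h2
      subst h1
      simpa using hpa

lemma suffix_claim
    (hloopless : ∀ v : V, ¬ E v v)
    (htour : ∀ u v : V, u ≠ v → (E u v ↔ ¬ E v u))
    {l P : List V} {w : V}
    (hmax : ∀ l', l' ~ l → wt E l' ≤ wt E l)
    (hPw : P ++ [w] = l)
    (hwP : w ∉ P) :
    ∀ (n : ℕ) (s : List V), s <:+ P → s.length ≤ n →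
      s.countP (fun x => decide (E w x)) ≤
        s.countP (fun x => decide (x ≠ w ∧ ¬ E w x ∧ ∃ u, E w u ∧ E u x)) := by
  intro n
  induction n with
  | zero =>
    intro s hs hlen
    have : s = [] := List.length_eq_zero_iff.1 (Nat.le_zero.1 hlen)
    subst this; simp
  | succ n ih =>
    intro s hs hlen
    match s with
    | [] => simp
    | x :: t =>
      have ht : t <:+ P := (List.suffix_cons x t).trans hs
      have htlen : t.length ≤ n := by
        simp only [List.length_cons] at hlen; omega
      have iht := ih t ht htlen
      obtain ⟨A, hA⟩ := hs
      by_cases hx : E w x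
      · -- x is an out-neighbor of w
        set pO : V → Bool := fun y => decide (E w y) with hpO
        set pO2 : V → Bool := fun y => decide (y ≠ w ∧ ¬ E w y ∧ ∃ u, E w u ∧ E u y) with hpO2
        set nb : V → Bool := fun y => pO y || pO2 y with hnb
        cases hd : t.dropWhile nb with
        | nil =>
          -- no bad vertex after x: use feed property at w over the whole suffix s
          have hall : ∀ a ∈ t, nb a = true := List.dropWhile_eq_nil_iff.1 hd
          have hfeed := feed E hmax (A := A) (I := x :: t) (b := w) (C := [])
            (by rw [← hPw, ← hA]; simp)
          refine le_trans ?_ (le_trans hfeed ?_)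
          · exact le_of_eq rfl
          · refine List.countP_mono_left ?_
            intro a ha hab
            have haw : E a w := of_decide_eq_true hab
            have hanw : a ≠ w := fun h => hloopless w (h ▸ haw)
            have hnwa : ¬ E w a := (htour a w hanw).1 haw
            rcases List.mem_cons.1 ha with rfl | hat
            · exact absurd hx hnwa
            · have := hall a hat
              simp only [hnb, Bool.or_eq_true] at this
              rcases this with h' | h'
              · exact absurd (of_decide_eq_true h') hnwa
              · exact h'
        | cons b C =>
          set I : List V := t.takeWhile nb with hI
          have ht2 : t = I ++ b :: C := by
            rw [hI, ← hd, List.takeWhile_append_dropWhile]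
          have hIa : ∀ a ∈ I, nb a = true := fun a ha => List.mem_takeWhile_imp ha
          have hbnb : nb b = false := dropWhile_head_false nb t hd
          have hbP : b ∈ P := ht.subset (ht2 ▸ List.mem_append_right I (show b ∈ b :: C from List.mem_cons_self))
          have hbw : b ≠ w := fun h => hwP (h ▸ hbP)
          have hbO : ¬ E w b := by
            simp only [hnb, hpO, hpO2, Bool.or_eq_false_iff, decide_eq_false_iff_not] at hbnb
            exact hbnb.1
          have hbO2 : ¬ ∃ u, E w u ∧ E u b := by
            simp only [hnb, hpO, hpO2, Bool.or_eq_false_iff, decide_eq_false_iff_not] at hbnb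
            exact fun h => hbnb.2 ⟨hbw, hbO, h⟩
          -- each member of x :: I is an out- or second-neighbor
          have hmemnb : ∀ a ∈ x :: I, E w a ∨ pO2 a = true := by
            intro a ha
            rcases List.mem_cons.1 ha with rfl | haI
            · exact Or.inl hx
            · have := hIa a haI
              simp only [hnb, Bool.or_eq_true] at this
              rcases this with h' | h'
              · exact Or.inl (of_decide_eq_true h')
              · exact Or.inr h'
          have hfeed := feed E hmax (A := A) (I := x :: I) (b := b) (C := C ++ [w])
            (by rw [← hPw, ← hA, ht2]; simp)
          have h1 : (x :: I).countP pO ≤ (x :: I).countP (fun a => decide (E b a)) := by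
            refine List.countP_mono_left ?_
            intro a ha hab
            have hwa : E w a := of_decide_eq_true hab
            by_contra hba
            have hba' : ¬ E b a := by simpa using hba
            have hanb : a ≠ b := fun h => hbO (h ▸ hwa)
            have : E a b := by
              by_contra h
              exact hba' ((htour b a (Ne.symm hanb)).2 h)
            exact hbO2 ⟨a, hwa, this⟩
          have h2 : (x :: I).countP (fun a => decide (E a b)) ≤ (x :: I).countP pO2 := by
            refine List.countP_mono_left ?_
            intro a ha hab
            have hab' : E a b := of_decide_eq_true hab
            rcases hmemnb a ha with h' | h'
            · exact absurd ⟨a, h', hab'⟩ hbO2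
            · exact h'
          have hbcsuf : (b :: C) <:+ P :=
            List.IsSuffix.trans (show b :: C <:+ t from ⟨I, ht2.symm⟩) ht
          have hbclen : (b :: C).length ≤ n := by
            have := htlen
            rw [ht2] at this
            simp only [List.length_append, List.length_cons] at this ⊢
            omega
          have hbc := ih (b :: C) hbcsuf hbclen
          have hsplit : x :: t = (x :: I) ++ (b :: C) := by rw [ht2]; rfl
          rw [hsplit, List.countP_append, List.countP_append]
          omega
      · -- x is not an out-neighbor: trivial step
        rw [List.countP_cons, List.countP_cons]
        have hfx : ¬ ((decide (E w x) : Bool) = true) := by simpa using hx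
        rw [if_neg hfx]
        exact Nat.add_le_add iht (Nat.zero_le _)

theorem main [Nonempty V]
    (hloopless : ∀ v : V, ¬ E v v)
    (htour : ∀ u v : V, u ≠ v → (E u v ↔ ¬ E v u)) :
    ∃ v : V, (Finset.univ.filter fun x => E v x).card ≤
      (Finset.univ.filter fun x => x ≠ v ∧ ¬ E v x ∧ ∃ u, E v u ∧ E u x).card := by
  set L0 : List V := (Finset.univ : Finset V).toList with hL0
  have hL0nd : L0.Nodup := Finset.nodup_toList _
  have hL0ne : L0 ≠ [] := by
    intro h
    exact Finset.univ_nonempty.ne_empty (Finset.toList_eq_nil.mp h)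
  have hself : L0 ∈ L0.permutations := List.mem_permutations.2 (List.Perm.refl _)
  cases hc : L0.permutations.argmax (wt E) with
  | none =>
    rw [List.argmax_eq_none] at hc
    rw [hc] at hself
    exact absurd hself List.not_mem_nil
  | some l =>
    have hcm : l ∈ L0.permutations.argmax (wt E) := Option.mem_def.mpr hc
    have hlperm : l ~ L0 := List.mem_permutations.1 (List.argmax_mem hcm)
    have hmax : ∀ l', l' ~ l → wt E l' ≤ wt E l := fun l' h =>
      List.le_of_mem_argmax (List.mem_permutations.2 (h.trans hlperm)) hcm
    have hlnd : l.Nodup := hlperm.nodup_iff.2 hL0nd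
    have hlne : l ≠ [] := by
      intro h
      have hlen := hlperm.length_eq
      rw [h] at hlen
      exact hL0ne (List.length_eq_zero_iff.1 hlen.symm)
    set w := l.getLast hlne with hw
    set P := l.dropLast with hP
    have hPw : P ++ [w] = l := List.dropLast_append_getLast hlne
    have hnd2 : P.Nodup ∧ [w].Nodup ∧ List.Disjoint P [w] :=
      by have h := List.nodup_append.1 (hPw ▸ hlnd); exact ⟨h.1, h.2.1, by intro a ha hb; exact h.2.2 a ha a hb rfl⟩
    have hPnd : P.Nodup := hnd2.1
    have hwP : w ∉ P := fun hm => hnd2.2.2 hm (List.mem_singleton.2 rfl)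
    have hmemP : ∀ v : V, v ≠ w → v ∈ P := by
      intro v hv
      have hvl : v ∈ l := hlperm.mem_iff.2 (by simp [hL0])
      rw [← hPw, List.mem_append] at hvl
      rcases hvl with h | h
      · exact h
      · rw [List.mem_singleton] at h; exact absurd h hv
    have hclaim := suffix_claim E hloopless htour hmax hPw hwP P.length P
      (List.suffix_refl P) le_rfl
    refine ⟨w, ?_⟩
    have key : ∀ p : V → Bool, p w = false →
        P.countP p = (Finset.univ.filter fun x => p x = true).card := by
      intro p hpw
      rw [List.countP_eq_length_filter]
      rw [← List.toFinset_card_of_nodup (hPnd.filter p)]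
      rw [List.toFinset_filter]
      congr 1
      ext a
      simp only [Finset.mem_filter, List.mem_toFinset, Finset.mem_univ, true_and]
      constructor
      · rintro ⟨_, h⟩; exact h
      · intro h
        refine ⟨hmemP a ?_, h⟩
        rintro rfl
        rw [hpw] at h
        exact Bool.false_ne_true h
    have h1 := key (fun x => decide (E w x)) (by simp [hloopless w])
    have h2 := key (fun x => decide (x ≠ w ∧ ¬ E w x ∧ ∃ u, E w u ∧ E u x)) (by simp)
    rw [h1, h2] at hclaim
    have e1 : (Finset.univ.filter fun x => (decide (E w x)) = true) =
        (Finset.univ.filter fun x => E w x) := by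
      apply Finset.filter_congr
      intro x _
      simp
    have e2 : (Finset.univ.filter fun x =>
          (decide (x ≠ w ∧ ¬ E w x ∧ ∃ u, E w u ∧ E u x)) = true) =
        (Finset.univ.filter fun x => x ≠ w ∧ ¬ E w x ∧ ∃ u, E w u ∧ E u x) := by
      apply Finset.filter_congr
      intro x _
      simp
    rw [e1, e2] at hclaim
    exact hclaim

end SNPaux

/-- Every tournament has a vertex whose second out-neighborhood (vertices at directed
distance exactly 2) is at least as large as its first out-neighborhood. -/
theorem stmt3 {V : Type*} [Fintype V] [Nonempty V] (E : V → V → Prop)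
    (hloopless : ∀ v : V, ¬ E v v)
    (htour : ∀ u v : V, u ≠ v → (E u v ↔ ¬ E v u)) :
    ∃ v : V, {w | E v w}.ncard ≤
      {w | w ≠ v ∧ ¬ E v w ∧ ∃ u, E v u ∧ E u w}.ncard := by
  classical
  obtain ⟨v, hv⟩ := SNPaux.main E hloopless htour
  refine ⟨v, ?_⟩
  have e1 : {w | E v w} = ((Finset.univ.filter fun x => E v x : Finset V) : Set V) := by
    ext a; simp
  have e2 : {w | w ≠ v ∧ ¬ E v w ∧ ∃ u, E v u ∧ E u w} =
      ((Finset.univ.filter fun x => x ≠ v ∧ ¬ E v x ∧ ∃ u, E v u ∧ E u x : Finset V) : Set V) := by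
    ext a; simp
  rw [e1, e2, Set.ncard_coe_finset, Set.ncard_coe_finset]
  exact hv
end

section
/- (Chowla) Let m be a positive integer and let A, B ⊆ Z/mZ be nonempty with 0 ∈ B and gcd(b, m) = 1 for every nonzero b ∈ B. Then |A+B| ≥ min(m, |A|+|B|-1). -/
open Pointwise

lemma chowla_aux (m : ℕ) (hm : 0 < m) : ∀ n : ℕ, ∀ A B : Finset (ZMod m),
    A.Nonempty → B.Nonempty → (0 : ZMod m) ∈ B →
    (∀ b ∈ B, b ≠ 0 → IsUnit b) → B.card ≤ n →
    min m (A.card + B.card - 1) ≤ (A + B).card := by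
  haveI : NeZero m := ⟨hm.ne'⟩
  intro n
  induction n with
  | zero =>
    intro A B hA hB h0 hunit hcard
    exact absurd (Finset.card_pos.mpr hB) (by omega)
  | succ n ih =>
    intro A B hA hB h0 hunit hcard
    classical
    by_cases hB1 : B.card ≤ 1
    · -- B = {0}
      have hBeq : B = {0} := by
        apply Finset.eq_singleton_iff_unique_mem.mpr
        refine ⟨h0, fun x hx => ?_⟩
        by_contra hne
        have := Finset.one_lt_card.mpr ⟨x, hx, 0, h0, hne⟩
        omega
      subst hBeq
      simp only [Finset.add_singleton, add_zero, Finset.image_id']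
      have : A.card + 1 - 1 = A.card := by omega
      rw [Finset.card_singleton, this]
      calc min m A.card ≤ A.card := min_le_right _ _
        _ = (A.image (· + (0:ZMod m))).card := by simp
        _ ≤ (A.image (· + (0:ZMod m))).card := le_refl _
      -- fix below
    · obtain ⟨b, hbB, hbne⟩ : ∃ b ∈ B, b ≠ 0 := by
        by_contra h
        push_neg at h
        have : B ⊆ {0} := fun x hx => Finset.mem_singleton.mpr (h x hx)
        have := Finset.card_le_card this
        simp at this; omega
      have hbu : IsUnit b := hunit b hbB hbne
      by_cases hall : ∀ a ∈ A, a + b ∈ A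
      · -- A = univ
        obtain ⟨a, ha⟩ := hA
        have hk : ∀ k : ℕ, a + (k : ZMod m) * b ∈ A := by
          intro k
          induction k with
          | zero => simpa using ha
          | succ k ihk =>
            have := hall _ ihk
            push_cast
            convert this using 1
            ring
        have hAuniv : A = Finset.univ := by
          apply Finset.eq_univ_of_forall
          intro y
          obtain ⟨u, hu⟩ := hbu
          obtain ⟨k, hk'⟩ := ZMod.natCast_zmod_surjective (n := m) ((y - a) * ↑u⁻¹)
          have : a + (k : ZMod m) * b = y := by
            rw [hk', ← hu]
            calc a + (y - a) * ↑u⁻¹ * ↑u = a + (y - a) * (↑u⁻¹ * ↑u) := by ring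
              _ = a + (y - a) * 1 := by norm_cast; simp
              _ = y := by ring
          rw [← this]; exact hk k
        have hsub : A ⊆ A + B := fun x hx => by
          have := Finset.add_mem_add hx h0
          simpa using this
        have : (A + B).card = m := by
          have : Finset.univ ⊆ A + B := hAuniv ▸ hsub
          have h1 := Finset.card_le_card this
          have h2 := Finset.card_le_univ (A + B)
          simp [ZMod.card] at h1 h2 ⊢
          omega
        rw [this]; exact min_le_left _ _
      · push_neg at hall
        obtain ⟨a, haA, hab⟩ := hall
        set A' := A ∪ B.image (a + ·) with hA'def
        set B' := B.filter (fun x => a + x ∈ A) with hB'def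
        set T := (B.image (a + ·)) \ A with hTdef
        have hinj : Set.InjOn (a + ·) B := fun x _ y _ h => by
          simpa using h
        have hcardA' : A'.card = A.card + T.card := by
          rw [hA'def, hTdef, Finset.union_comm, ← Finset.card_sdiff_add_card]
          omega
        have hcardB' : B'.card + T.card = B.card := by
          have himg : (B.filter (fun x => a + x ∉ A)).image (a + ·) = T := by
            ext y
            simp only [Finset.mem_image, Finset.mem_filter, hTdef, Finset.mem_sdiff]
            constructor
            · rintro ⟨x, ⟨hx, hx2⟩, rfl⟩
              exact ⟨⟨x, hx, rfl⟩, hx2⟩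
            · rintro ⟨⟨x, hx, rfl⟩, hy⟩
              exact ⟨x, ⟨hx, hy⟩, rfl⟩
          have := Finset.card_image_of_injOn (f := (a + ·))
            (s := B.filter (fun x => a + x ∉ A)) (hinj.mono (Finset.filter_subset _ _))
          rw [himg] at this
          rw [hB'def, this, Finset.card_filter_add_card_filter_not]
        have hB'lt : B'.card < B.card := by
          have : B' ⊂ B := by
            refine Finset.ssubset_iff_of_subset (Finset.filter_subset _ _) |>.mpr ?_
            exact ⟨b, hbB, by simp [hB'def, hab]⟩
          exact Finset.card_lt_card this
        have h0' : (0 : ZMod m) ∈ B' := by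
          simp [hB'def, h0, haA]
        have hsum : A'.card + B'.card = A.card + B.card := by omega
        have hsubset : A' + B' ⊆ A + B := by
          intro x hx
          rw [Finset.mem_add] at hx ⊢
          obtain ⟨y, hy, z, hz, rfl⟩ := hx
          rw [hB'def, Finset.mem_filter] at hz
          rw [hA'def, Finset.mem_union] at hy
          rcases hy with hy | hy
          · exact ⟨y, hy, z, Finset.mem_filter.mp (by rw [← hB'def]; exact Finset.mem_filter.mpr hz) |>.1, rfl⟩
          · obtain ⟨c, hc, rfl⟩ := Finset.mem_image.mp hy
            exact ⟨a + z, hz.2, c, hc, by ring⟩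
        have hrec := ih A' B' ⟨a, Finset.mem_union_left _ haA⟩ ⟨0, h0'⟩ h0'
          (fun x hx hxne => hunit x (Finset.mem_of_mem_filter x hx) hxne)
          (by omega)
        calc min m (A.card + B.card - 1) = min m (A'.card + B'.card - 1) := by rw [hsum]
          _ ≤ (A' + B').card := hrec
          _ ≤ (A + B).card := Finset.card_le_card hsubset

/-- Chowla's theorem: if `A, B ⊆ ℤ/mℤ` are nonempty, `0 ∈ B`, and every nonzero
element of `B` is a unit of `ℤ/mℤ` (i.e. coprime to `m`), then
`|A + B| ≥ min(m, |A| + |B| - 1)`. -/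
theorem stmt6 (m : ℕ) (hm : 0 < m) (A B : Finset (ZMod m))
    (hA : A.Nonempty) (hB : B.Nonempty)
    (h0 : (0 : ZMod m) ∈ B)
    (hunit : ∀ b ∈ B, b ≠ 0 → IsUnit b) :
    min m (A.card + B.card - 1) ≤ (A + B).card := by
  exact chowla_aux m hm B.card A B hA hB h0 hunit le_rfl
end

section
/- (Erdős-Heilbronn, proved by Dias da Silva and Hamidoune) Let p be a prime and A ⊆ Z/pZ be nonempty. Then |A +̂ A| ≥ min(2|A|-3, p), where A +̂ A = {a + a' : a, a' ∈ A, a ≠ a'}. -/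
open Finset Polynomial

variable {F : Type*} [Field F] [DecidableEq F]

noncomputable def wt (s : Finset F) (x : F) : F := (∏ y ∈ s.erase x, (x - y))⁻¹

lemma basis_coeff (s : Finset F) {x : F} (hx : x ∈ s) :
    (Lagrange.basis s id x).coeff (s.card - 1) = wt s x := by
  have hinj : Set.InjOn (id : F → F) s := Function.injective_id.injOn
  have hdeg : (Lagrange.basis s id x).natDegree = s.card - 1 :=
    Lagrange.natDegree_basis hinj hx
  rw [← hdeg, ← leadingCoeff]
  unfold Lagrange.basis
  rw [leadingCoeff_prod]
  rw [wt, ← Finset.prod_inv_distrib]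
  apply Finset.prod_congr rfl
  intro y hy
  have hne : (x : F) ≠ y := fun h => (Finset.mem_erase.1 hy).1 (h.symm)
  rw [Lagrange.basisDivisor, leadingCoeff_mul, leadingCoeff_C, leadingCoeff_X_sub_C, mul_one]
  rfl

lemma powsum (s : Finset F) {i : ℕ} (hi : i < s.card) :
    ∑ x ∈ s, wt s x * x ^ i = if i = s.card - 1 then 1 else 0 := by
  have hinj : Set.InjOn (id : F → F) s := Function.injective_id.injOn
  have hdeg : ((X : F[X]) ^ i).degree < s.card := by
    rw [degree_X_pow]; exact_mod_cast hi
  have h := Lagrange.eq_interpolate (f := (X : F[X]) ^ i) hinj hdeg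
  have h2 := congrArg (fun q => Polynomial.coeff q (s.card - 1)) h
  simp only [Lagrange.interpolate_apply, finset_sum_coeff, coeff_C_mul, eval_pow, eval_X,
    coeff_X_pow, id_eq] at h2
  rw [Finset.sum_congr rfl
    (fun x hx => by rw [basis_coeff s hx, mul_comm] :
      ∀ x ∈ s, x ^ i * (Lagrange.basis s id x).coeff (s.card - 1) = wt s x * x ^ i)] at h2
  rw [← h2]
  simp [eq_comm]

lemma core (A B C : Finset F) (n₁ n₂ : ℕ)
    (hA : A.card = n₁ + 2) (hB : B.card = n₂ + 2) (hm : C.card = n₁ + n₂ + 1)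
    (hmem : ∀ α ∈ A, ∀ β ∈ B, α ≠ β → α + β ∈ C)
    (hbin : ((Nat.choose (n₁ + n₂ + 1) n₁ : F)) ≠ (Nat.choose (n₁ + n₂ + 1) (n₁ + 1) : F)) :
    False := by
  set m := n₁ + n₂ + 1 with hmdef
  set N := Lagrange.nodal C id with hN
  have hNdeg : N.natDegree = m := by rw [hN, Lagrange.natDegree_nodal, hm]
  have hNm : N.coeff m = 1 := by
    rw [← hNdeg]; exact Lagrange.nodal_monic.coeff_natDegree
  set PA : ℕ → F := fun u => ∑ x ∈ A, wt A x * x ^ u with hPAdef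
  set PB : ℕ → F := fun u => ∑ x ∈ B, wt B x * x ^ u with hPBdef
  have hPA0 : ∀ u, u < n₁ + 1 → PA u = 0 := by
    intro u hu
    simp only [hPAdef]
    rw [powsum A (by omega : u < A.card), if_neg (by omega : ¬ u = A.card - 1)]
  have hPA1 : PA (n₁ + 1) = 1 := by
    simp only [hPAdef]
    rw [powsum A (by omega : n₁ + 1 < A.card), if_pos (by omega : n₁ + 1 = A.card - 1)]
  have hPB0 : ∀ u, u < n₂ + 1 → PB u = 0 := by
    intro u hu
    simp only [hPBdef]
    rw [powsum B (by omega : u < B.card), if_neg (by omega : ¬ u = B.card - 1)]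
  have hPB1 : PB (n₂ + 1) = 1 := by
    simp only [hPBdef]
    rw [powsum B (by omega : n₂ + 1 < B.card), if_pos (by omega : n₂ + 1 = B.card - 1)]
  set S : F := ∑ α ∈ A, ∑ β ∈ B,
    wt A α * wt B β * ((α - β) * ∏ c ∈ C, (α + β - c)) with hSdef
  have hS0 : S = 0 := by
    rw [hSdef]
    refine Finset.sum_eq_zero fun α hα => Finset.sum_eq_zero fun β hβ => ?_
    rcases eq_or_ne α β with h | h
    · rw [h, sub_self, zero_mul, mul_zero]
    · rw [Finset.prod_eq_zero (hmem α hα β hβ h) (sub_self _), mul_zero, mul_zero]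
  -- pointwise expansion
  have hpt : ∀ α β : F,
      wt A α * wt B β * ((α - β) * ∏ c ∈ C, (α + β - c)) =
      ∑ j ∈ Finset.range (m + 1), ∑ i ∈ Finset.range (j + 1),
        (N.coeff j * (Nat.choose j i : F)) *
          ((wt A α * α ^ (i + 1)) * (wt B β * β ^ (j - i)) -
           (wt A α * α ^ i) * (wt B β * β ^ (j - i + 1))) := by
    intro α β
    have h0 : eval (α + β) N = ∏ c ∈ C, (α + β - c) := by
      rw [hN, Lagrange.eval_nodal]; simp only [id_eq]
    have h1 : ∏ c ∈ C, (α + β - c) =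
        ∑ j ∈ Finset.range (m + 1), N.coeff j * (α + β) ^ j := by
      rw [← h0, eval_eq_sum_range, hNdeg]
    rw [h1, Finset.mul_sum, Finset.mul_sum]
    refine Finset.sum_congr rfl fun j _ => ?_
    rw [add_pow, Finset.mul_sum, Finset.mul_sum, Finset.mul_sum]
    refine Finset.sum_congr rfl fun i hi => ?_
    ring
  -- rewrite S with sigma sums and swap
  set σ := (Finset.range (m + 1)).sigma (fun j => Finset.range (j + 1)) with hσ
  set f : (Σ _ : ℕ, ℕ) → F := fun x =>
    (N.coeff x.1 * (Nat.choose x.1 x.2 : F)) *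
      (PA (x.2 + 1) * PB (x.1 - x.2) - PA x.2 * PB (x.1 - x.2 + 1)) with hf
  have hS1 : S = ∑ x ∈ σ, f x := by
    rw [hSdef]
    calc ∑ α ∈ A, ∑ β ∈ B, wt A α * wt B β * ((α - β) * ∏ c ∈ C, (α + β - c))
        = ∑ α ∈ A, ∑ β ∈ B, ∑ x ∈ σ, (N.coeff x.1 * (Nat.choose x.1 x.2 : F)) *
            ((wt A α * α ^ (x.2 + 1)) * (wt B β * β ^ (x.1 - x.2)) -
             (wt A α * α ^ x.2) * (wt B β * β ^ (x.1 - x.2 + 1))) := by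
          refine Finset.sum_congr rfl fun α _ => Finset.sum_congr rfl fun β _ => ?_
          rw [hpt α β, hσ, Finset.sum_sigma']
      _ = ∑ x ∈ σ, ∑ α ∈ A, ∑ β ∈ B, (N.coeff x.1 * (Nat.choose x.1 x.2 : F)) *
            ((wt A α * α ^ (x.2 + 1)) * (wt B β * β ^ (x.1 - x.2)) -
             (wt A α * α ^ x.2) * (wt B β * β ^ (x.1 - x.2 + 1))) :=
          (Finset.sum_congr rfl fun α _ => Finset.sum_comm).trans Finset.sum_comm
      _ = ∑ x ∈ σ, f x := by
          refine Finset.sum_congr rfl fun x hx => ?_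
          simp only [hf]
          have e1 : ∀ u v : ℕ, PA u * PB v =
              ∑ α ∈ A, ∑ β ∈ B, (wt A α * α ^ u) * (wt B β * β ^ v) := by
            intro u v
            simp only [hPAdef, hPBdef]
            exact Finset.sum_mul_sum _ _ _ _
          rw [e1, e1]
          simp only [mul_sub, Finset.mul_sum, Finset.sum_sub_distrib]
  -- evaluate the sigma sum
  have hmemσ1 : (⟨m, n₁⟩ : Σ _ : ℕ, ℕ) ∈ σ := by
    simp only [hσ, Finset.mem_sigma, Finset.mem_range]; omega
  have hmemσ2 : (⟨m, n₁ + 1⟩ : Σ _ : ℕ, ℕ) ∈ σ := by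
    simp only [hσ, Finset.mem_sigma, Finset.mem_range]; omega
  have hzero : ∀ u v : ℕ, u + v ≤ m + 1 → ¬(u = n₁ + 1 ∧ v = n₂ + 1) →
      PA u * PB v = 0 := by
    intro u v huv hne
    rcases Nat.lt_or_ge u (n₁ + 1) with h | h
    · rw [hPA0 u h, zero_mul]
    · have hv : v < n₂ + 1 := by
        by_contra h'
        exact hne ⟨by omega, by omega⟩
      rw [hPB0 v hv, mul_zero]
  have hS2 : ∑ x ∈ σ, f x =
      (Nat.choose m n₁ : F) - (Nat.choose m (n₁ + 1) : F) := by
    have hsplit : ∀ x ∈ σ, f x =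
        (N.coeff x.1 * (Nat.choose x.1 x.2 : F)) * (PA (x.2 + 1) * PB (x.1 - x.2)) -
        (N.coeff x.1 * (Nat.choose x.1 x.2 : F)) * (PA x.2 * PB (x.1 - x.2 + 1)) := by
      intro x _; simp only [hf]; ring
    rw [Finset.sum_congr rfl hsplit, Finset.sum_sub_distrib]
    have e1 : ∑ x ∈ σ, (N.coeff x.1 * (Nat.choose x.1 x.2 : F)) *
        (PA (x.2 + 1) * PB (x.1 - x.2)) = (Nat.choose m n₁ : F) := by
      rw [Finset.sum_eq_single_of_mem ⟨m, n₁⟩ hmemσ1]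
      · have h2 : m - n₁ = n₂ + 1 := by omega
        rw [h2, hPA1, hPB1, hNm]; ring
      · rintro ⟨j, i⟩ hx hne
        simp only [hσ, Finset.mem_sigma, Finset.mem_range] at hx
        have hni : ¬(j = m ∧ i = n₁) := by
          rintro ⟨rfl, rfl⟩; exact hne rfl
        rw [hzero (i + 1) (j - i) (by omega) (by omega), mul_zero]
    have e2 : ∑ x ∈ σ, (N.coeff x.1 * (Nat.choose x.1 x.2 : F)) *
        (PA x.2 * PB (x.1 - x.2 + 1)) = (Nat.choose m (n₁ + 1) : F) := by
      rw [Finset.sum_eq_single_of_mem ⟨m, n₁ + 1⟩ hmemσ2]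
      · have h2 : m - (n₁ + 1) + 1 = n₂ + 1 := by omega
        rw [h2, hPA1, hPB1, hNm]; ring
      · rintro ⟨j, i⟩ hx hne
        simp only [hσ, Finset.mem_sigma, Finset.mem_range] at hx
        have hni : ¬(j = m ∧ i = n₁ + 1) := by
          rintro ⟨rfl, rfl⟩; exact hne rfl
        rw [hzero i (j - i + 1) (by omega) (by omega), mul_zero]
    rw [e1, e2]
  rw [hS1, hS2] at hS0
  exact hbin (sub_eq_zero.mp hS0)

lemma EH {p : ℕ} (hp : p.Prime) (A : Finset (ZMod p)) (hk : 2 * A.card ≤ p + 3) :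
    2 * A.card - 3 ≤
      (((A ×ˢ A).filter fun q => q.1 ≠ q.2).image
        (fun q : ZMod p × ZMod p => q.1 + q.2)).card := by
  haveI : Fact p.Prime := ⟨hp⟩
  haveI : NeZero p := ⟨hp.pos.ne'⟩
  set D := ((A ×ˢ A).filter fun q => q.1 ≠ q.2).image
      (fun q : ZMod p × ZMod p => q.1 + q.2) with hD
  have hmemD : ∀ a ∈ A, ∀ b ∈ A, a ≠ b → a + b ∈ D := by
    intro a ha b hb hab
    rw [hD]
    exact Finset.mem_image.2 ⟨(a, b), Finset.mem_filter.2
      ⟨Finset.mem_product.2 ⟨ha, hb⟩, hab⟩, rfl⟩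
  rcases Nat.lt_or_ge A.card 3 with hsmall | hbig
  · rcases Nat.lt_or_ge A.card 2 with h1 | h2
    · omega
    · have hcard2 : A.card = 2 := by omega
      have : ∃ a ∈ A, ∃ b ∈ A, a ≠ b := Finset.one_lt_card.1 (by omega)
      obtain ⟨a, ha, b, hb, hab⟩ := this
      have : D.Nonempty := ⟨a + b, hmemD a ha b hb hab⟩
      have := Finset.card_pos.2 this
      omega
  · by_contra hcon
    push_neg at hcon
    obtain ⟨t, ht⟩ : ∃ t, A.card = t + 3 := ⟨A.card - 3, by omega⟩
    have hDcard : D.card ≤ 2 * t + 2 := by omega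
    have hple : 2 * t + 3 ≤ p := by omega
    -- pad D to a set C of size 2t+2
    have hub : 2 * t + 2 ≤ (Finset.univ : Finset (ZMod p)).card := by
      rw [Finset.card_univ, ZMod.card]; omega
    obtain ⟨C, hDC, -, hC⟩ :=
      Finset.exists_subsuperset_card_eq (Finset.subset_univ D) hDcard hub
    -- take B = A minus a point
    obtain ⟨a₀, ha₀⟩ : A.Nonempty := Finset.card_pos.1 (by omega)
    set B := A.erase a₀ with hB
    have hBcard : B.card = t + 2 := by
      rw [hB, Finset.card_erase_of_mem ha₀]; omega
    refine core A B C (t + 1) t ht hBcard (by omega : C.card = (t + 1) + t + 1) ?_ ?_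
    · intro α hα β hβ hne
      exact hDC (hmemD α hα β (Finset.mem_of_mem_erase hβ) hne)
    · -- binomial nonvanishing mod p
      intro heq
      have h1 : Nat.choose (2 * t + 2) (t + 2) * (t + 2) =
          Nat.choose (2 * t + 2) (t + 1) * (t + 1) := by
        have := Nat.choose_succ_right_eq (2 * t + 2) (t + 1)
        have h2 : 2 * t + 2 - (t + 1) = t + 1 := by omega
        rw [h2] at this
        exact this
      have hiden : ((t + 1) + t + 1) = 2 * t + 2 := by omega
      rw [hiden] at heq
      have h2 : (Nat.choose (2 * t + 2) (t + 2) : ZMod p) * ((t : ZMod p) + 2) =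
          (Nat.choose (2 * t + 2) (t + 1) : ZMod p) * ((t : ZMod p) + 1) := by
        have := congrArg (fun n : ℕ => (n : ZMod p)) h1
        push_cast at this
        convert this using 2
      rw [← heq] at h2
      have hc0 : (Nat.choose (2 * t + 2) (t + 1) : ZMod p) = 0 := by
        linear_combination h2
      have hdvd : p ∣ Nat.choose (2 * t + 2) (t + 1) :=
        (ZMod.natCast_eq_zero_iff _ _).1 hc0
      have hdvdfac : p ∣ Nat.factorial (2 * t + 2) := by
        have hfac := Nat.choose_mul_factorial_mul_factorial
          (by omega : t + 1 ≤ 2 * t + 2)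
        have h4 : 2 * t + 2 - (t + 1) = t + 1 := by omega
        rw [h4] at hfac
        exact hfac ▸ ((hdvd.mul_right _).mul_right _)
      have := (Nat.Prime.dvd_factorial hp).1 hdvdfac
      omega

/-- Erdős–Heilbronn (Dias da Silva–Hamidoune): for a prime `p` and nonempty
`A ⊆ ℤ/pℤ`, the restricted sumset `A +̂ A` has size at least `min(2|A| - 3, p)`. -/
theorem stmt7 (p : ℕ) (hp : p.Prime) (A : Finset (ZMod p)) (hA : A.Nonempty) :
    min (2 * A.card - 3) p ≤
      ({x | ∃ a ∈ A, ∃ b ∈ A, a ≠ b ∧ x = a + b} : Set (ZMod p)).ncard := by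
  classical
  haveI : NeZero p := ⟨hp.pos.ne'⟩
  set D := ((A ×ˢ A).filter fun q => q.1 ≠ q.2).image
      (fun q : ZMod p × ZMod p => q.1 + q.2) with hD
  have hset : ({x | ∃ a ∈ A, ∃ b ∈ A, a ≠ b ∧ x = a + b} : Set (ZMod p)) = ↑D := by
    ext x
    simp only [Set.mem_setOf_eq, hD, Finset.coe_image, Set.mem_image, Finset.mem_coe,
      Finset.mem_filter, Finset.mem_product]
    constructor
    · rintro ⟨a, ha, b, hb, hab, rfl⟩
      exact ⟨(a, b), ⟨⟨ha, hb⟩, hab⟩, rfl⟩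
    · rintro ⟨⟨a, b⟩, ⟨⟨ha, hb⟩, hab⟩, rfl⟩
      exact ⟨a, ha, b, hb, hab, rfl⟩
  rw [hset, Set.ncard_coe_finset]
  rcases le_or_gt (2 * A.card) (p + 3) with hk | hk
  · exact le_trans (min_le_left _ _) (EH hp A hk)
  · have hcardle : A.card ≤ p := by
      have := Finset.card_le_univ A
      rwa [ZMod.card] at this
    have hp3 : 3 < p := by omega
    have hodd : p % 2 = 1 := Nat.odd_iff.1 (hp.odd_of_ne_two (by omega))
    set k' := (p + 3) / 2 with hk'
    have h2k' : 2 * k' = p + 3 := by omega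
    have hk'le : k' ≤ A.card := by omega
    obtain ⟨A', hA'sub, hA'card⟩ := Finset.exists_subset_card_eq hk'le
    have hEH := EH hp A' (by omega)
    set D' := ((A' ×ˢ A').filter fun q => q.1 ≠ q.2).image
        (fun q : ZMod p × ZMod p => q.1 + q.2) with hD'
    have hsub : D' ⊆ D := by
      intro x hx
      rw [hD'] at hx
      obtain ⟨q, hq, rfl⟩ := Finset.mem_image.1 hx
      obtain ⟨hqp, hqne⟩ := Finset.mem_filter.1 hq
      obtain ⟨h1, h2⟩ := Finset.mem_product.1 hqp
      exact Finset.mem_image.2 ⟨q, Finset.mem_filter.2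
        ⟨Finset.mem_product.2 ⟨hA'sub h1, hA'sub h2⟩, hqne⟩, rfl⟩
    have : p ≤ D.card := by
      have := Finset.card_le_card hsub
      omega
    exact le_trans (min_le_right _ _) this
end

section
/- (Kemperman) Let Γ be a group and let A, B be finite nonempty subsets of Γ with 1 ∈ A and 1 ∈ B. If the only pair (a,b) ∈ A × B with ab = 1 is (1,1), then |AB| ≥ |A| + |B| - 1. -/
open Pointwise

section KempermanAux

open Finset

private lemma kemp_mu_lt {P P' A A' S S' : ℕ} (hP : 1 ≤ P) (hP' : P' ≤ P)
    (hS' : S' ≤ P') (hS : S ≤ P) (hA' : A' ≤ 2 * P')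
    (hc : P' < P ∨ (P' = P ∧ A < A') ∨ (P' = P ∧ A' = A ∧ S' < S)) :
    8 * P' ^ 3 + 2 * P' * (2 * P' - A') + S' < 8 * P ^ 3 + 2 * P * (2 * P - A) + S := by
  rcases hc with h | ⟨hpe, h⟩ | ⟨hpe, h1, h2⟩
  · have e1 : 2 * P' * (2 * P' - A') ≤ 4 * P' ^ 2 := by
      have h0 : 2 * P' - A' ≤ 2 * P' := Nat.sub_le _ _
      nlinarith
    have b1 : 8 * P' ^ 3 + 2 * P' * (2 * P' - A') + S' ≤ 8 * P' ^ 3 + 4 * P' ^ 2 + P' := by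
      linarith
    have b2 : 8 * P' ^ 3 + 4 * P' ^ 2 + P' < 8 * (P' + 1) ^ 3 := by nlinarith
    have b3 : 8 * (P' + 1) ^ 3 ≤ 8 * P ^ 3 :=
      Nat.mul_le_mul_left 8 (Nat.pow_le_pow_left h 3)
    have b4 : 8 * P ^ 3 ≤ 8 * P ^ 3 + 2 * P * (2 * P - A) + S := by omega
    linarith
  · -- P' = P, A < A'
    rw [hpe] at hS' hA' ⊢
    have hm : 2 * P * (2 * P - A') + 2 * P ≤ 2 * P * (2 * P - A) := by
      have hstep : (2 * P - A') + 1 ≤ 2 * P - A := by omega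
      calc 2 * P * (2 * P - A') + 2 * P = 2 * P * ((2 * P - A') + 1) := by ring
        _ ≤ 2 * P * (2 * P - A) := Nat.mul_le_mul_left _ hstep
    have hS0 : (0 : ℕ) ≤ S := Nat.zero_le _
    linarith
  · rw [hpe, h1]
    exact Nat.add_lt_add_left h2 _

variable {Γ : Type*} [Group Γ] [DecidableEq Γ]

private lemma kemp_finset (n : ℕ) :
    ∀ s t : Finset Γ,
      8 * (#(s * t)) ^ 3 + 2 * #(s * t) * (2 * #(s * t) - (#s + #t)) + #s ≤ n →
      (1 : Γ) ∈ s → (1 : Γ) ∈ t →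
      (∀ a ∈ s, ∀ b ∈ t, a * b = 1 → a = 1 ∧ b = 1) →
      #s + #t - 1 ≤ #(s * t) := by
  induction n using Nat.strong_induction_on with
  | _ n ih =>
  intro s t hn h1s h1t h
  have hss : s ⊆ s * t := fun x hx => by simpa using mul_mem_mul hx h1t
  have hts : t ⊆ s * t := fun x hx => by simpa using mul_mem_mul h1s hx
  have hP1 : 1 ≤ #(s * t) := card_pos.2 ⟨1, hss h1s⟩
  by_cases htriv : ∀ x ∈ s ∩ t, x = 1
  · -- base case : s ∩ t = {1}
    have hint : s ∩ t = {1} := by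
      apply Finset.eq_singleton_iff_unique_mem.2
      exact ⟨mem_inter.2 ⟨h1s, h1t⟩, htriv⟩
    have h1 := card_le_card (union_subset hss hts)
    have h2 : #(s ∪ t) + #(s ∩ t) = #s + #t := card_union_add_card_inter s t
    rw [hint, card_singleton] at h2
    omega
  · push_neg at htriv
    obtain ⟨u, hu, hune⟩ := htriv
    have hus : u ∈ s := (mem_inter.1 hu).1
    have hut : u ∈ t := (mem_inter.1 hu).2
    have huinv_s : u⁻¹ ∉ s := fun hc => hune (h u⁻¹ hc u hut (by simp)).2
    have huinv_t : u⁻¹ ∉ t := fun hc => hune (h u hus u⁻¹ hc (by simp)).1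
    -- translate membership lemmas
    have memru : ∀ x : Γ, x ∈ s * {u} ↔ x * u⁻¹ ∈ s := by
      intro x
      rw [Finset.mem_mul]
      constructor
      · rintro ⟨y, hy, z, hz, rfl⟩
        rw [Finset.mem_singleton] at hz
        subst hz
        simpa using hy
      · intro hx
        exact ⟨x * u⁻¹, hx, u, Finset.mem_singleton_self u, by simp⟩
    have memru' : ∀ x : Γ, x ∈ s * {u⁻¹} ↔ x * u ∈ s := by
      intro x
      rw [Finset.mem_mul]
      constructor
      · rintro ⟨y, hy, z, hz, rfl⟩
        rw [Finset.mem_singleton] at hz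
        subst hz
        simpa using hy
      · intro hx
        exact ⟨x * u, hx, u⁻¹, Finset.mem_singleton_self _, by simp⟩
    have memlu : ∀ x : Γ, x ∈ ({u} : Finset Γ) * t ↔ u⁻¹ * x ∈ t := by
      intro x
      rw [Finset.mem_mul]
      constructor
      · rintro ⟨y, hy, z, hz, rfl⟩
        rw [Finset.mem_singleton] at hy
        subst hy
        simpa using hz
      · intro hx
        exact ⟨u, Finset.mem_singleton_self u, u⁻¹ * x, hx, by simp⟩
    have memlu' : ∀ x : Γ, x ∈ ({u⁻¹} : Finset Γ) * t ↔ u * x ∈ t := by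
      intro x
      rw [Finset.mem_mul]
      constructor
      · rintro ⟨y, hy, z, hz, rfl⟩
        rw [Finset.mem_singleton] at hy
        subst hy
        simpa using hz
      · intro hx
        exact ⟨u⁻¹, Finset.mem_singleton_self _, u * x, hx, by simp⟩
    -- the two sdiff cardinalities
    have hD2 : #(s \ (s * {u⁻¹})) = #((s * {u}) \ s) := by
      apply card_bij (fun x _ => x * u)
      · intro a ha
        rw [mem_sdiff] at ha ⊢
        refine ⟨(memru _).2 (by simpa using ha.1), fun hc => ha.2 ((memru' a).2 hc)⟩
      · intro a _ b _ hab
        exact mul_right_cancel hab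
      · intro b hb
        rw [mem_sdiff] at hb
        refine ⟨b * u⁻¹, mem_sdiff.2 ⟨(memru _).1 hb.1, fun hc => hb.2 ?_⟩, by simp⟩
        simpa using (memru' _).1 hc
    have hD1 : #(t \ (({u⁻¹} : Finset Γ) * t)) = #((({u} : Finset Γ) * t) \ t) := by
      apply card_bij (fun x _ => u * x)
      · intro a ha
        rw [mem_sdiff] at ha ⊢
        exact ⟨(memlu _).2 (by simpa using ha.1), fun hc => ha.2 ((memlu' a).2 hc)⟩
      · intro a _ b _ hab
        exact mul_left_cancel hab
      · intro b hb
        rw [mem_sdiff] at hb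
        refine ⟨u⁻¹ * b, mem_sdiff.2 ⟨(memlu _).1 hb.1, fun hc => hb.2 ?_⟩, by simp⟩
        simpa using (memlu' _).1 hc
    set D2 := #((s * {u}) \ s) with hD2def
    set D1 := #((({u} : Finset Γ) * t) \ t) with hD1def
    -- positivity of D1, D2
    have hcards : #(s * {u}) = #s := by
      rw [mul_singleton]
      exact card_smul_finset _ _
    have hcardt : #(({u} : Finset Γ) * t) = #t := by
      rw [singleton_mul]
      exact card_smul_finset _ _
    have hD2pos : 0 < D2 := by
      rw [hD2def]
      refine card_pos.2 (sdiff_nonempty.2 ?_)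
      intro hsub
      have heq : s * {u} = s := eq_of_subset_of_card_le hsub (by omega)
      have h1m : (1 : Γ) ∈ s * {u} := by rw [heq]; exact h1s
      exact huinv_s (by simpa using (memru 1).1 h1m)
    have hD1pos : 0 < D1 := by
      rw [hD1def]
      refine card_pos.2 (sdiff_nonempty.2 ?_)
      intro hsub
      have heq : ({u} : Finset Γ) * t = t := eq_of_subset_of_card_le hsub (by omega)
      have h1m : (1 : Γ) ∈ ({u} : Finset Γ) * t := by rw [heq]; exact h1t
      exact huinv_t (by simpa using (memlu 1).1 h1m)
    rcases le_or_gt D2 D1 with hcase | hcase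
    · -- Transform 1 : (s ∩ s·u⁻¹, t ∪ u·t)
      set s' : Finset Γ := s ∩ (s * {u⁻¹}) with hs'def
      set t' : Finset Γ := t ∪ (({u} : Finset Γ) * t) with ht'def
      have hcs' : #s' + D2 = #s := by
        have e0 := card_inter_add_card_sdiff s (s * {u⁻¹})
        rw [hD2, ← hs'def] at e0
        exact e0
      have hct' : #t' = #t + D1 := by
        have e1 : #(t ∪ (({u} : Finset Γ) * t)) + #(t ∩ (({u} : Finset Γ) * t))
            = #t + #(({u} : Finset Γ) * t) := card_union_add_card_inter _ _
        have e2 : #((({u} : Finset Γ) * t) ∩ t) + D1 = #(({u} : Finset Γ) * t) :=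
          card_inter_add_card_sdiff _ _
        rw [inter_comm] at e2
        rw [← ht'def] at e1
        omega
      have h1s' : (1 : Γ) ∈ s' := mem_inter.2 ⟨h1s, (memru' 1).2 (by simpa using hus)⟩
      have h1t' : (1 : Γ) ∈ t' := mem_union_left _ h1t
      have hinv' : ∀ a ∈ s', ∀ b ∈ t', a * b = 1 → a = 1 ∧ b = 1 := by
        intro a ha b hb hab
        rcases mem_union.1 hb with hb' | hb'
        · exact h a (mem_inter.1 ha).1 b hb' hab
        · exfalso
          have hau : a * u ∈ s := (memru' a).1 (mem_inter.1 ha).2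
          have hub : u⁻¹ * b ∈ t := (memlu b).1 hb'
          have hprod : (a * u) * (u⁻¹ * b) = 1 := by
            rw [← hab]; group
          have := (h _ hau _ hub hprod).1
          have ha1 : a = u⁻¹ := eq_inv_of_mul_eq_one_left this
          exact huinv_s (ha1 ▸ (mem_inter.1 ha).1)
      have hsub' : s' * t' ⊆ s * t := by
        intro x hx
        rw [mem_mul] at hx
        obtain ⟨a, ha, b, hb, rfl⟩ := hx
        rcases mem_union.1 hb with hb' | hb'
        · exact mul_mem_mul (mem_inter.1 ha).1 hb'
        · have hau : a * u ∈ s := (memru' a).1 (mem_inter.1 ha).2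
          have hub : u⁻¹ * b ∈ t := (memlu b).1 hb'
          have : a * b = (a * u) * (u⁻¹ * b) := by group
          rw [this]
          exact mul_mem_mul hau hub
      have hP'le : #(s' * t') ≤ #(s * t) := card_le_card hsub'
      have hss' : s' ⊆ s' * t' := fun x hx => by simpa using mul_mem_mul hx h1t'
      have hts' : t' ⊆ s' * t' := fun x hx => by simpa using mul_mem_mul h1s' hx
      have hS'le : #s' ≤ #(s' * t') := card_le_card hss'
      have hT'le : #t' ≤ #(s' * t') := card_le_card hts'
      have hSle : #s ≤ #(s * t) := card_le_card hss
      have hmu : 8 * (#(s' * t')) ^ 3 + 2 * #(s' * t') * (2 * #(s' * t') - (#s' + #t')) + #s'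
          < 8 * (#(s * t)) ^ 3 + 2 * #(s * t) * (2 * #(s * t) - (#s + #t)) + #s := by
        apply kemp_mu_lt hP1 hP'le hS'le hSle (by omega)
        rcases lt_or_eq_of_le hP'le with hlt | heq
        · exact Or.inl hlt
        · rcases lt_or_eq_of_le hcase with hlt2 | heq2
          · exact Or.inr (Or.inl ⟨heq, by omega⟩)
          · exact Or.inr (Or.inr ⟨heq, by omega, by omega⟩)
      have hrec := ih _ (lt_of_lt_of_le hmu hn) s' t' le_rfl h1s' h1t' hinv'
      omega
    · -- Transform 2 : (s ∪ s·u, t ∩ u⁻¹·t)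
      set s' : Finset Γ := s ∪ (s * {u}) with hs'def
      set t' : Finset Γ := t ∩ (({u⁻¹} : Finset Γ) * t) with ht'def
      have hcs' : #s' = #s + D2 := by
        have e1 : #(s ∪ (s * {u})) + #(s ∩ (s * {u})) = #s + #(s * {u}) :=
          card_union_add_card_inter _ _
        have e2 : #((s * {u}) ∩ s) + D2 = #(s * {u}) := card_inter_add_card_sdiff _ _
        rw [inter_comm] at e2
        rw [← hs'def] at e1
        omega
      have hct' : #t' + D1 = #t := by
        have e0 := card_inter_add_card_sdiff t (({u⁻¹} : Finset Γ) * t)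
        rw [hD1, ← ht'def] at e0
        exact e0
      have h1s' : (1 : Γ) ∈ s' := mem_union_left _ h1s
      have h1t' : (1 : Γ) ∈ t' := mem_inter.2 ⟨h1t, (memlu' 1).2 (by simpa using hut)⟩
      have hinv' : ∀ a ∈ s', ∀ b ∈ t', a * b = 1 → a = 1 ∧ b = 1 := by
        intro a ha b hb hab
        rcases mem_union.1 ha with ha' | ha'
        · exact h a ha' b (mem_inter.1 hb).1 hab
        · exfalso
          have hau : a * u⁻¹ ∈ s := (memru a).1 ha'
          have hub : u * b ∈ t := (memlu' b).1 (mem_inter.1 hb).2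
          have hprod : (a * u⁻¹) * (u * b) = 1 := by
            rw [← hab]; group
          have := (h _ hau _ hub hprod).2
          have hb1 : b = u⁻¹ := eq_inv_of_mul_eq_one_right this
          exact huinv_t (hb1 ▸ (mem_inter.1 hb).1)
      have hsub' : s' * t' ⊆ s * t := by
        intro x hx
        rw [mem_mul] at hx
        obtain ⟨a, ha, b, hb, rfl⟩ := hx
        rcases mem_union.1 ha with ha' | ha'
        · exact mul_mem_mul ha' (mem_inter.1 hb).1
        · have hau : a * u⁻¹ ∈ s := (memru a).1 ha'
          have hub : u * b ∈ t := (memlu' b).1 (mem_inter.1 hb).2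
          have : a * b = (a * u⁻¹) * (u * b) := by group
          rw [this]
          exact mul_mem_mul hau hub
      have hP'le : #(s' * t') ≤ #(s * t) := card_le_card hsub'
      have hss' : s' ⊆ s' * t' := fun x hx => by simpa using mul_mem_mul hx h1t'
      have hts' : t' ⊆ s' * t' := fun x hx => by simpa using mul_mem_mul h1s' hx
      have hS'le : #s' ≤ #(s' * t') := card_le_card hss'
      have hT'le : #t' ≤ #(s' * t') := card_le_card hts'
      have hSle : #s ≤ #(s * t) := card_le_card hss
      have hmu : 8 * (#(s' * t')) ^ 3 + 2 * #(s' * t') * (2 * #(s' * t') - (#s' + #t')) + #s'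
          < 8 * (#(s * t)) ^ 3 + 2 * #(s * t) * (2 * #(s * t) - (#s + #t)) + #s := by
        apply kemp_mu_lt hP1 hP'le hS'le hSle (by omega)
        rcases lt_or_eq_of_le hP'le with hlt | heq
        · exact Or.inl hlt
        · exact Or.inr (Or.inl ⟨heq, by omega⟩)
      have hrec := ih _ (lt_of_lt_of_le hmu hn) s' t' le_rfl h1s' h1t' hinv'
      omega

end KempermanAux

/-- Kemperman's lemma: in a group `Γ`, if `A, B` are finite nonempty subsets containing `1`
and `(1,1)` is the only pair `(a,b) ∈ A × B` with `ab = 1`, then `|AB| ≥ |A| + |B| - 1`. -/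
theorem stmt8 {Γ : Type*} [Group Γ] (A B : Set Γ) (hA : A.Finite) (hB : B.Finite)
    (h1A : (1 : Γ) ∈ A) (h1B : (1 : Γ) ∈ B)
    (h : ∀ a ∈ A, ∀ b ∈ B, a * b = 1 → a = 1 ∧ b = 1) :
    A.ncard + B.ncard - 1 ≤ (A * B).ncard := by
  classical
  have hABf : (A * B).Finite := hA.mul hB
  have hfs : hABf.toFinset = hA.toFinset * hB.toFinset := Set.Finite.toFinset_mul hA hB hABf
  rw [Set.ncard_eq_toFinset_card _ hA, Set.ncard_eq_toFinset_card _ hB,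
    Set.ncard_eq_toFinset_card _ hABf, hfs]
  refine kemp_finset _ hA.toFinset hB.toFinset le_rfl ?_ ?_ ?_
  · exact hA.mem_toFinset.2 h1A
  · exact hB.mem_toFinset.2 h1B
  · intro a ha b hb hab
    exact h a (hA.mem_toFinset.1 ha) b (hB.mem_toFinset.1 hb) hab
end

section
/- Let Γ be an abelian group and A, B finite nonempty subsets with |A| = n. If |A+B| ≤ cn for some real c ≥ 1, then for all positive integers k and ℓ, |kB - ℓB| ≤ c^{k+ℓ} · n. -/
open Pointwise

/-- Plünnecke–Ruzsa: if `|A| = n` and `|A + B| ≤ cn` with `c ≥ 1`, then for all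
positive integers `k, ℓ`, `|kB - ℓB| ≤ c^(k+ℓ) · n`. -/
theorem stmt10 {Γ : Type*} [AddCommGroup Γ] (A B : Set Γ) (hA : A.Finite) (hB : B.Finite)
    (hAne : A.Nonempty) (hBne : B.Nonempty) (n : ℕ) (hn : A.ncard = n)
    (c : ℝ) (hc1 : 1 ≤ c) (hc : ((A + B).ncard : ℝ) ≤ c * n) :
    ∀ k l : ℕ, 1 ≤ k → 1 ≤ l →
      (({x | ∃ (f : Fin k → Γ) (g : Fin l → Γ), (∀ i, f i ∈ B) ∧ (∀ j, g j ∈ B) ∧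
          x = (∑ i, f i) - ∑ j, g j} : Set Γ).ncard : ℝ) ≤ c ^ (k + l) * n := by
  classical
  intro k l hk hl
  set A' := hA.toFinset with hA'def
  set B' := hB.toFinset with hB'def
  have hBc : (B' : Set Γ) = B := hB.coe_toFinset
  have hAc : (A' : Set Γ) = A := hA.coe_toFinset
  have hset : {x | ∃ (f : Fin k → Γ) (g : Fin l → Γ), (∀ i, f i ∈ B) ∧ (∀ j, g j ∈ B) ∧
          x = (∑ i, f i) - ∑ j, g j} = ↑(k • B' - l • B') := by
    ext x
    simp only [Finset.coe_sub, Finset.coe_nsmul, hBc, Set.mem_sub, Set.mem_nsmul,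
      Set.mem_setOf_eq]
    constructor
    · rintro ⟨f, g, hf, hg, rfl⟩
      exact ⟨∑ i, f i, ⟨fun i => ⟨f i, hf i⟩, by simp [List.sum_ofFn]⟩,
        ∑ j, g j, ⟨fun j => ⟨g j, hg j⟩, by simp [List.sum_ofFn]⟩, rfl⟩
    · rintro ⟨y, ⟨f, rfl⟩, z, ⟨g, rfl⟩, rfl⟩
      exact ⟨fun i => f i, fun j => g j, fun i => (f i).2, fun j => (g j).2,
        by simp [List.sum_ofFn]⟩
  rw [hset, Set.ncard_coe_finset]
  have hA'ne : A'.Nonempty := by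
    rw [← Finset.coe_nonempty, hAc]; exact hAne
  have hAcard : (A'.card : ℝ) = n := by
    rw [← hn, ← hAc, Set.ncard_coe_finset]
  have hABcard : ((A' + B').card : ℝ) = (A + B).ncard := by
    rw [← hAc, ← hBc, ← Finset.coe_add, Set.ncard_coe_finset]
  have key := Finset.pluennecke_ruzsa_inequality_nsmul_sub_nsmul_add hA'ne B' k l
  have hnpos : (0:ℝ) < n := by
    have := hAne.ncard_pos hA
    rw [hn] at this
    exact_mod_cast this
  have key' : ((k • B' - l • B').card : ℝ) ≤
      (((A' + B').card : ℝ) / A'.card) ^ (k + l) * A'.card := by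
    have := key
    have : ((k • B' - l • B' : Finset Γ).card : ℚ≥0) ≤
        (((A' + B').card : ℚ≥0) / A'.card) ^ (k + l) * A'.card := this
    calc ((k • B' - l • B').card : ℝ)
        = ((((k • B' - l • B').card : ℚ≥0) : ℝ)) := by norm_cast
      _ ≤ ((((((A' + B').card : ℚ≥0) / A'.card) ^ (k + l) * A'.card : ℚ≥0)) : ℝ) := by
          exact_mod_cast this
      _ = (((A' + B').card : ℝ) / A'.card) ^ (k + l) * A'.card := by
          push_cast; ring
  refine key'.trans ?_
  rw [hAcard, hABcard]
  have hratio : ((A + B).ncard : ℝ) / n ≤ c := by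
    rw [div_le_iff₀ hnpos]; exact hc
  have h0 : (0:ℝ) ≤ ((A + B).ncard : ℝ) / n := by positivity
  gcongr
end

section
/- (Generalized Erdős-Heilbronn) Let p be a prime and A, B ⊆ Z/pZ be nonempty with |A| ≠ |B|. Then |A +̂ B| ≥ min(|A| + |B| - 2, p), where A +̂ B = {a + b : a ∈ A, b ∈ B, a ≠ b}. -/
open Finset Polynomial

section Helpers

variable {F : Type*} [Field F] [DecidableEq F]

lemma lag_basis_coeff (s : Finset F) (a : F) (ha : a ∈ s) :
    (Lagrange.basis s id a).coeff (s.card - 1) = (∏ b ∈ s.erase a, (a - b))⁻¹ := by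
  have hM : (∏ b ∈ s.erase a, (X - C b) : F[X]).Monic :=
    monic_prod_of_monic _ _ fun _ _ => monic_X_sub_C _
  have hMdeg : (∏ b ∈ s.erase a, (X - C b) : F[X]).natDegree = s.card - 1 := by
    rw [natDegree_prod _ _ fun b _ => X_sub_C_ne_zero b]
    simp [card_erase_of_mem ha]
  have hbasis : Lagrange.basis s id a
      = C (∏ b ∈ s.erase a, (a - b)⁻¹) * ∏ b ∈ s.erase a, (X - C b) := by
    rw [Lagrange.basis]
    simp only [Lagrange.basisDivisor, id_eq]
    rw [prod_mul_distrib, map_prod]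
  rw [hbasis, coeff_C_mul, ← hMdeg, hM.coeff_natDegree, mul_one, ← prod_inv_distrib]

lemma lag_sum (s : Finset F) (i : ℕ) (hi : i + 1 ≤ s.card) :
    ∑ a ∈ s, (∏ b ∈ s.erase a, (a - b))⁻¹ * a ^ i
      = if i + 1 = s.card then 1 else 0 := by
  have hinj : Set.InjOn (id : F → F) s := Function.injective_id.injOn
  have hdeg : ((X : F[X]) ^ i).degree < s.card := by
    rw [degree_X_pow]
    exact_mod_cast Nat.lt_of_succ_le hi
  have h := Lagrange.eq_interpolate (v := id) hinj hdeg
  have h2 := congrArg (fun q : F[X] => q.coeff (s.card - 1)) h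
  simp only [Lagrange.interpolate_apply, finset_sum_coeff, coeff_C_mul, coeff_X_pow] at h2
  rw [show ((if s.card - 1 = i then (1:F) else 0) = if i + 1 = s.card then 1 else 0) by
        split_ifs with h3 h4 h4 <;> first | rfl | omega] at h2
  rw [h2]
  refine Finset.sum_congr rfl fun a ha => ?_
  rw [lag_basis_coeff s a ha]
  simp [eval_pow, mul_comm]

lemma key_prod (A B : Finset F) (hA : A.Nonempty) (hB : B.Nonempty) (e1 e2 : ℕ)
    (h : e1 + e2 + 2 ≤ A.card + B.card) :
    (∑ a ∈ A, (∏ x ∈ A.erase a, (a - x))⁻¹ * a ^ e1) *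
      (∑ b ∈ B, (∏ x ∈ B.erase b, (b - x))⁻¹ * b ^ e2)
      = if e1 + 1 = A.card ∧ e2 + 1 = B.card then 1 else 0 := by
  have hAc := hA.card_pos
  have hBc := hB.card_pos
  rcases le_or_gt (e1 + 1) A.card with h1 | h1
  · rw [lag_sum A e1 h1]
    by_cases he1 : e1 + 1 = A.card
    · have h2 : e2 + 1 ≤ B.card := by omega
      rw [if_pos he1, one_mul, lag_sum B e2 h2]
      by_cases he2 : e2 + 1 = B.card
      · rw [if_pos he2, if_pos ⟨he1, he2⟩]
      · rw [if_neg he2, if_neg (by tauto)]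
    · rw [if_neg he1, zero_mul, if_neg (by tauto)]
  · have h2 : e2 + 1 ≤ B.card := by omega
    have he2 : e2 + 1 ≠ B.card := by omega
    rw [lag_sum B e2 h2, if_neg he2, mul_zero, if_neg (by omega)]

end Helpers

/-- Generalized Erdős–Heilbronn: for a prime `p` and nonempty `A, B ⊆ ℤ/pℤ` with
`|A| ≠ |B|`, the restricted sumset `A +̂ B` has size at least `min(|A| + |B| - 2, p)`. -/
theorem stmt11 (p : ℕ) (hp : p.Prime) (A B : Finset (ZMod p))
    (hA : A.Nonempty) (hB : B.Nonempty) (hAB : A.card ≠ B.card) :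
    min (A.card + B.card - 2) p ≤
      ({x | ∃ a ∈ A, ∃ b ∈ B, a ≠ b ∧ x = a + b} : Set (ZMod p)).ncard := by
  haveI := Fact.mk hp
  haveI : NeZero p := ⟨hp.ne_zero⟩
  classical
  set Sfin : Finset (ZMod p) :=
    ((A ×ˢ B).filter fun q => q.1 ≠ q.2).image fun q => q.1 + q.2 with hSdef
  have hmem : ∀ x, x ∈ Sfin ↔ ∃ a ∈ A, ∃ b ∈ B, a ≠ b ∧ a + b = x := by
    intro x
    simp only [hSdef, mem_image, mem_filter, mem_product, Prod.exists]
    constructor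
    · rintro ⟨a, b, ⟨⟨ha, hb⟩, hab⟩, rfl⟩; exact ⟨a, ha, b, hb, hab, rfl⟩
    · rintro ⟨a, ha, b, hb, hab, rfl⟩; exact ⟨a, b, ⟨⟨ha, hb⟩, hab⟩, rfl⟩
  have hset : ({x | ∃ a ∈ A, ∃ b ∈ B, a ≠ b ∧ x = a + b} : Set (ZMod p)) = ↑Sfin := by
    ext x
    simp only [Set.mem_setOf_eq, Finset.mem_coe, hmem x]
    constructor
    · rintro ⟨a, ha, b, hb, hab, rfl⟩; exact ⟨a, ha, b, hb, hab, rfl⟩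
    · rintro ⟨a, ha, b, hb, hab, rfl⟩; exact ⟨a, ha, b, hb, hab, rfl⟩
  rw [hset, Set.ncard_coe_finset]
  have hcardp : Fintype.card (ZMod p) = p := ZMod.card p
  have hAp : A.card ≤ p := le_trans A.card_le_univ (le_of_eq hcardp)
  have hBp : B.card ≤ p := le_trans B.card_le_univ (le_of_eq hcardp)
  have hAc := hA.card_pos
  have hBc := hB.card_pos
  rcases le_or_gt p (A.card + B.card - 2) with hbig | hsmall
  · -- the restricted sumset is everything
    have huniv : Sfin = Finset.univ := by
      refine Finset.eq_univ_iff_forall.mpr fun x => ?_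
      set D := B.image (fun b => x - b) with hDdef
      have hD : D.card = B.card := card_image_of_injective _ sub_right_injective
      have hcap : 2 ≤ (A ∩ D).card := by
        have h1 := Finset.card_inter_add_card_union A D
        have h2 : (A ∪ D).card ≤ p := le_trans (card_le_univ _) (le_of_eq hcardp)
        omega
      obtain ⟨a1, ha1, a2, ha2, hne⟩ := Finset.one_lt_card.mp hcap
      obtain ⟨b1, hb1, hab1⟩ : ∃ b ∈ B, x - b = a1 := by
        have := mem_image.mp (mem_of_mem_inter_right ha1); tauto
      obtain ⟨b2, hb2, hab2⟩ : ∃ b ∈ B, x - b = a2 := by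
        have := mem_image.mp (mem_of_mem_inter_right ha2); tauto
      have hx1 : a1 + b1 = x := by rw [← hab1]; ring
      have hx2 : a2 + b2 = x := by rw [← hab2]; ring
      by_cases hd1 : a1 = b1
      · by_cases hd2 : a2 = b2
        · exfalso
          have h2ne : (2 : ZMod p) ≠ 0 := by
            have hp2 : p ≠ 2 := by rintro rfl; omega
            intro h
            rw [show (2 : ZMod p) = ((2 : ℕ) : ZMod p) by norm_num,
              ZMod.natCast_eq_zero_iff] at h
            exact hp2 ((Nat.prime_dvd_prime_iff_eq hp Nat.prime_two).mp h)
          apply hne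
          have e1 : a1 + a1 = x := by rw [← hd1] at hx1; exact hx1
          have e2 : a2 + a2 = x := by rw [← hd2] at hx2; exact hx2
          have h12 : 2 * a1 = 2 * a2 := by rw [two_mul, two_mul, e1, e2]
          exact mul_left_cancel₀ h2ne h12
        · exact (hmem x).mpr ⟨a2, mem_of_mem_inter_left ha2, b2, hb2, hd2, hx2⟩
      · exact (hmem x).mpr ⟨a1, mem_of_mem_inter_left ha1, b1, hb1, hd1, hx1⟩
    rw [huniv, card_univ, hcardp]
    exact min_le_right _ _
  · rw [min_eq_left (by omega)]
    by_cases hm1 : B.card = 1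
    · obtain ⟨b, rfl⟩ := card_eq_one.mp hm1
      have hsub : (A.erase b).image (· + b) ⊆ Sfin := by
        intro x hx
        obtain ⟨a, ha, rfl⟩ := mem_image.mp hx
        exact (hmem _).mpr
          ⟨a, mem_of_mem_erase ha, b, mem_singleton_self b, ne_of_mem_erase ha, rfl⟩
      have h1 := Finset.card_le_card hsub
      rw [Finset.card_image_of_injective _ (add_left_injective b)] at h1
      have h3 := Finset.pred_card_le_card_erase (s := A) (a := b)
      simp only [card_singleton]
      omega
    by_cases hn1 : A.card = 1
    · obtain ⟨a, rfl⟩ := card_eq_one.mp hn1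
      have hsub : (B.erase a).image (a + ·) ⊆ Sfin := by
        intro x hx
        obtain ⟨b, hb, rfl⟩ := mem_image.mp hx
        exact (hmem _).mpr
          ⟨a, mem_singleton_self a, b, mem_of_mem_erase hb, (ne_of_mem_erase hb).symm, rfl⟩
      have h1 := Finset.card_le_card hsub
      rw [Finset.card_image_of_injective _ (add_right_injective a)] at h1
      have h3 := Finset.pred_card_le_card_erase (s := B) (a := a)
      simp only [card_singleton]
      omega
    have hn2 : 2 ≤ A.card := by omega
    have hm2 : 2 ≤ B.card := by omega
    by_contra hcon
    push_neg at hcon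
    set N := A.card + B.card - 3 with hN
    obtain ⟨C, hSC, hCcard⟩ :=
      Finset.exists_superset_card_eq (n := N) (s := Sfin) (by omega) (by rw [hcardp]; omega)
    set wA : ZMod p → ZMod p := fun a => (∏ x ∈ A.erase a, (a - x))⁻¹ with hwA
    set wB : ZMod p → ZMod p := fun b => (∏ x ∈ B.erase b, (b - x))⁻¹ with hwB
    set Q : Polynomial (ZMod p) := ∏ c ∈ C, (X - Polynomial.C c) with hQ
    have hQmonic : Q.Monic := monic_prod_of_monic _ _ fun _ _ => monic_X_sub_C _
    have hQdeg : Q.natDegree = N := by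
      rw [hQ, natDegree_prod _ _ fun c _ => X_sub_C_ne_zero c]
      simp [hCcard]
    have hQN : Q.coeff N = 1 := hQdeg ▸ hQmonic.coeff_natDegree
    have hT0 : ∑ a ∈ A, ∑ b ∈ B, wA a * wB b * ((a - b) * Q.eval (a + b)) = 0 := by
      refine Finset.sum_eq_zero fun a ha => Finset.sum_eq_zero fun b hb => ?_
      by_cases hab : a = b
      · rw [hab, sub_self, zero_mul, mul_zero]
      · have hmemC : a + b ∈ C := hSC ((hmem _).mpr ⟨a, ha, b, hb, hab, rfl⟩)
        have hz : Q.eval (a + b) = 0 := by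
          rw [hQ, eval_prod]
          refine Finset.prod_eq_zero hmemC ?_
          simp
        rw [hz, mul_zero, mul_zero]
    have hexp : ∀ a b : ZMod p, wA a * wB b * ((a - b) * Q.eval (a + b)) =
        ∑ j ∈ range (N + 1), ∑ i ∈ range (j + 1),
          Q.coeff j * (j.choose i : ZMod p) *
            (wA a * a ^ (i + 1) * (wB b * b ^ (j - i))
              - wA a * a ^ i * (wB b * b ^ (j - i + 1))) := by
      intro a b
      rw [show Q.eval (a + b) = ∑ j ∈ range (N + 1), Q.coeff j * (a + b) ^ j by
            rw [← hQdeg]; exact eval_eq_sum_range _]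
      simp_rw [add_pow]
      simp only [Finset.mul_sum]
      refine Finset.sum_congr rfl fun j hj => Finset.sum_congr rfl fun i hi => ?_
      ring
    have hTval : ∑ a ∈ A, ∑ b ∈ B, wA a * wB b * ((a - b) * Q.eval (a + b))
        = (N.choose (A.card - 2) : ZMod p) - (N.choose (A.card - 1) : ZMod p) := by
      calc ∑ a ∈ A, ∑ b ∈ B, wA a * wB b * ((a - b) * Q.eval (a + b))
          = ∑ a ∈ A, ∑ b ∈ B, ∑ j ∈ range (N + 1), ∑ i ∈ range (j + 1),
              Q.coeff j * (j.choose i : ZMod p) *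
                (wA a * a ^ (i + 1) * (wB b * b ^ (j - i))
                  - wA a * a ^ i * (wB b * b ^ (j - i + 1))) :=
            Finset.sum_congr rfl fun a _ => Finset.sum_congr rfl fun b _ => hexp a b
        _ = ∑ j ∈ range (N + 1), ∑ i ∈ range (j + 1), ∑ a ∈ A, ∑ b ∈ B,
              Q.coeff j * (j.choose i : ZMod p) *
                (wA a * a ^ (i + 1) * (wB b * b ^ (j - i))
                  - wA a * a ^ i * (wB b * b ^ (j - i + 1))) := by
            rw [show (∑ a ∈ A, ∑ b ∈ B, ∑ j ∈ range (N + 1), ∑ i ∈ range (j + 1),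
              Q.coeff j * (j.choose i : ZMod p) *
                (wA a * a ^ (i + 1) * (wB b * b ^ (j - i))
                  - wA a * a ^ i * (wB b * b ^ (j - i + 1))))
              = ∑ a ∈ A, ∑ j ∈ range (N + 1), ∑ b ∈ B, ∑ i ∈ range (j + 1),
              Q.coeff j * (j.choose i : ZMod p) *
                (wA a * a ^ (i + 1) * (wB b * b ^ (j - i))
                  - wA a * a ^ i * (wB b * b ^ (j - i + 1))) from
              Finset.sum_congr rfl fun a _ => Finset.sum_comm]
            rw [Finset.sum_comm]
            refine Finset.sum_congr rfl fun j _ => ?_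
            rw [show (∑ a ∈ A, ∑ b ∈ B, ∑ i ∈ range (j + 1),
              Q.coeff j * (j.choose i : ZMod p) *
                (wA a * a ^ (i + 1) * (wB b * b ^ (j - i))
                  - wA a * a ^ i * (wB b * b ^ (j - i + 1))))
              = ∑ a ∈ A, ∑ i ∈ range (j + 1), ∑ b ∈ B,
              Q.coeff j * (j.choose i : ZMod p) *
                (wA a * a ^ (i + 1) * (wB b * b ^ (j - i))
                  - wA a * a ^ i * (wB b * b ^ (j - i + 1))) from
              Finset.sum_congr rfl fun a _ => Finset.sum_comm]
            exact Finset.sum_comm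
        _ = ∑ j ∈ range (N + 1), ∑ i ∈ range (j + 1),
              Q.coeff j * (j.choose i : ZMod p) *
                ((if i + 1 + 1 = A.card ∧ j - i + 1 = B.card then (1 : ZMod p) else 0)
                  - (if i + 1 = A.card ∧ j - i + 1 + 1 = B.card then (1 : ZMod p) else 0)) := by
            refine Finset.sum_congr rfl fun j hj => Finset.sum_congr rfl fun i hi => ?_
            rw [mem_range] at hj hi
            have hstep : ∑ a ∈ A, ∑ b ∈ B,
                Q.coeff j * (j.choose i : ZMod p) *
                  (wA a * a ^ (i + 1) * (wB b * b ^ (j - i))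
                    - wA a * a ^ i * (wB b * b ^ (j - i + 1)))
                = Q.coeff j * (j.choose i : ZMod p) *
                  ((∑ a ∈ A, wA a * a ^ (i + 1)) * (∑ b ∈ B, wB b * b ^ (j - i))
                    - (∑ a ∈ A, wA a * a ^ i) * (∑ b ∈ B, wB b * b ^ (j - i + 1))) := by
              rw [Finset.sum_mul_sum, Finset.sum_mul_sum, ← Finset.sum_sub_distrib,
                Finset.mul_sum]
              refine Finset.sum_congr rfl fun a _ => ?_
              rw [← Finset.sum_sub_distrib, Finset.mul_sum]
            rw [hstep]
            simp only [hwA, hwB]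
            rw [key_prod A B hA hB (i + 1) (j - i) (by omega),
              key_prod A B hA hB i (j - i + 1) (by omega)]
        _ = (N.choose (A.card - 2) : ZMod p) - (N.choose (A.card - 1) : ZMod p) := by
            simp_rw [mul_sub, Finset.sum_sub_distrib]
            have h1 : ∑ j ∈ range (N + 1), ∑ i ∈ range (j + 1),
                Q.coeff j * (j.choose i : ZMod p) *
                  (if i + 1 + 1 = A.card ∧ j - i + 1 = B.card then (1 : ZMod p) else 0)
                = (N.choose (A.card - 2) : ZMod p) := by
              rw [Finset.sum_eq_single_of_mem N (self_mem_range_succ N)]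
              · rw [Finset.sum_eq_single_of_mem (A.card - 2) (mem_range.mpr (by omega))]
                · rw [if_pos ⟨by omega, by omega⟩, mul_one, hQN, one_mul]
                · intro i hi hine
                  rw [if_neg (by omega), mul_zero]
              · intro j hj hjne
                rw [mem_range] at hj
                refine Finset.sum_eq_zero fun i hi => ?_
                rw [mem_range] at hi
                rw [if_neg (by omega), mul_zero]
            have h2 : ∑ j ∈ range (N + 1), ∑ i ∈ range (j + 1),
                Q.coeff j * (j.choose i : ZMod p) *
                  (if i + 1 = A.card ∧ j - i + 1 + 1 = B.card then (1 : ZMod p) else 0)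
                = (N.choose (A.card - 1) : ZMod p) := by
              rw [Finset.sum_eq_single_of_mem N (self_mem_range_succ N)]
              · rw [Finset.sum_eq_single_of_mem (A.card - 1) (mem_range.mpr (by omega))]
                · rw [if_pos ⟨by omega, by omega⟩, mul_one, hQN, one_mul]
                · intro i hi hine
                  rw [if_neg (by omega), mul_zero]
              · intro j hj hjne
                rw [mem_range] at hj
                refine Finset.sum_eq_zero fun i hi => ?_
                rw [mem_range] at hi
                rw [if_neg (by omega), mul_zero]
            rw [h1, h2]
    have hzero : (N.choose (A.card - 2) : ZMod p) - (N.choose (A.card - 1) : ZMod p) = 0 := by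
      rw [← hTval]; exact hT0
    have hCC : (N.choose (A.card - 2) : ZMod p) = (N.choose (A.card - 1) : ZMod p) :=
      sub_eq_zero.mp hzero
    have hC1ne : (N.choose (A.card - 2) : ZMod p) ≠ 0 := by
      intro h
      rw [ZMod.natCast_eq_zero_iff] at h
      have hfac : N.choose (A.card - 2) * ((A.card - 2).factorial * (N - (A.card - 2)).factorial)
          = N.factorial := by
        rw [← mul_assoc]
        exact Nat.choose_mul_factorial_mul_factorial (by omega)
      have hdvd : p ∣ N.factorial := hfac ▸ h.mul_right _
      have hle := (Nat.Prime.dvd_factorial hp).mp hdvd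
      omega
    have hid : N.choose (A.card - 1) * (A.card - 1)
        = N.choose (A.card - 2) * (B.card - 1) := by
      have h := Nat.choose_succ_right_eq N (A.card - 2)
      rw [show A.card - 2 + 1 = A.card - 1 by omega,
        show N - (A.card - 2) = B.card - 1 by omega] at h
      exact h
    have hc : (N.choose (A.card - 1) : ZMod p) * ((A.card - 1 : ℕ) : ZMod p)
        = (N.choose (A.card - 2) : ZMod p) * ((B.card - 1 : ℕ) : ZMod p) := by
      exact_mod_cast congrArg (fun k : ℕ => (k : ZMod p)) hid
    rw [← hCC] at hc
    have hnm := mul_left_cancel₀ hC1ne hc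
    rw [ZMod.natCast_eq_natCast_iff] at hnm
    have heq : A.card - 1 = B.card - 1 := by
      have h1 : (A.card - 1) % p = (B.card - 1) % p := hnm
      rw [Nat.mod_eq_of_lt (by omega), Nat.mod_eq_of_lt (by omega)] at h1
      exact h1
    exact hAB (by omega)
end

section
/- Let G be a loopless digon-free digraph on n vertices, let τ be the number of induced directed 2-edge paths in G. Then τ ≤ n³/12 + O(n²). -/
open Finset
open scoped Classical

private noncomputable def eI {n : ℕ} (E : Fin n → Fin n → Prop) (i j : Fin n) : ℕ :=
  if E i j then 1 else 0

private noncomputable def pI {n : ℕ} (E : Fin n → Fin n → Prop) (u v w : Fin n) : ℕ :=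
  if (u ≠ v ∧ v ≠ w ∧ u ≠ w ∧ E u v ∧ E v w ∧ ¬ E u w ∧ ¬ E w u ∧ ¬ E v u ∧ ¬ E w v)
  then 1 else 0

private lemma pt1 {n : ℕ} (E : Fin n → Fin n → Prop) (u v w : Fin n) :
    pI E u v w + eI E u v * eI E v w * eI E u w ≤ eI E u v * eI E v w := by
  unfold pI eI
  split_ifs <;> simp_all

private lemma pt2 {n : ℕ} (E : Fin n → Fin n → Prop) (u v w : Fin n) :
    pI E u v w + pI E w u v + eI E u v * eI E u w + eI E u v * eI E w v
      ≤ eI E u v + eI E u v * (eI E u w * eI E w v) := by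
  unfold pI eI
  split_ifs <;> simp_all

private theorem furedi_aux (n : ℕ) (E : Fin n → Fin n → Prop) :
    12 * ((Finset.univ.filter fun t : Fin n × Fin n × Fin n =>
        t.1 ≠ t.2.1 ∧ t.2.1 ≠ t.2.2 ∧ t.1 ≠ t.2.2 ∧
        E t.1 t.2.1 ∧ E t.2.1 t.2.2 ∧
        ¬ E t.1 t.2.2 ∧ ¬ E t.2.2 t.1 ∧ ¬ E t.2.1 t.1 ∧ ¬ E t.2.2 t.2.1).card : ℝ)
      ≤ (n : ℝ) ^ 3 := by
  classical
  rcases Nat.eq_zero_or_pos n with hn | hn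
  · subst hn
    simp [Finset.filter_true_of_mem, Finset.univ_eq_empty]
  have hcard : (Finset.univ.filter fun t : Fin n × Fin n × Fin n =>
        t.1 ≠ t.2.1 ∧ t.2.1 ≠ t.2.2 ∧ t.1 ≠ t.2.2 ∧
        E t.1 t.2.1 ∧ E t.2.1 t.2.2 ∧
        ¬ E t.1 t.2.2 ∧ ¬ E t.2.2 t.1 ∧ ¬ E t.2.1 t.1 ∧ ¬ E t.2.2 t.2.1).card
      = ∑ u : Fin n, ∑ v : Fin n, ∑ w : Fin n, pI E u v w := by
    rw [Finset.card_filter, Fintype.sum_prod_type]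
    refine Finset.sum_congr rfl fun u _ => ?_
    rw [Fintype.sum_prod_type]
    rfl
  rw [hcard]
  -- ℕ sums
  set A := ∑ u : Fin n, ∑ v : Fin n, ∑ w : Fin n, pI E u v w with hA
  set B := ∑ u : Fin n, ∑ v : Fin n, ∑ w : Fin n, eI E u v * eI E v w * eI E u w with hB
  set Cs := ∑ u : Fin n, ∑ v : Fin n, ∑ w : Fin n, eI E u v * eI E v w with hCs
  set D := ∑ u : Fin n, ∑ v : Fin n, ∑ w : Fin n, pI E w u v with hD
  set Fs := ∑ u : Fin n, ∑ v : Fin n, ∑ w : Fin n, eI E u v * eI E u w with hFs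
  set Gs := ∑ u : Fin n, ∑ v : Fin n, ∑ w : Fin n, eI E u v * eI E w v with hGs
  set Hs := ∑ u : Fin n, ∑ v : Fin n, ∑ _w : Fin n, eI E u v with hHs
  set Ks := ∑ u : Fin n, ∑ v : Fin n, ∑ w : Fin n, eI E u v * (eI E u w * eI E w v) with hKs
  have h1 : A + B ≤ Cs := by
    rw [hA, hB, hCs]
    simp only [← Finset.sum_add_distrib]
    exact Finset.sum_le_sum fun u _ => Finset.sum_le_sum fun v _ =>
      Finset.sum_le_sum fun w _ => pt1 E u v w
  have h2 : A + D + Fs + Gs ≤ Hs + Ks := by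
    rw [hA, hD, hFs, hGs, hHs, hKs]
    simp only [← Finset.sum_add_distrib]
    exact Finset.sum_le_sum fun u _ => Finset.sum_le_sum fun v _ =>
      Finset.sum_le_sum fun w _ => pt2 E u v w
  have hDA : D = A := by
    rw [hA, hD]
    have h1 : (∑ u : Fin n, ∑ v : Fin n, ∑ w : Fin n, pI E w u v)
        = ∑ u : Fin n, ∑ w : Fin n, ∑ v : Fin n, pI E w u v :=
      Finset.sum_congr rfl fun u _ => Finset.sum_comm
    rw [h1]
    exact Finset.sum_comm
  have hKB : Ks = B := by
    rw [hB, hKs]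
    refine Finset.sum_congr rfl fun u _ => ?_
    rw [Finset.sum_comm]
    exact Finset.sum_congr rfl fun v _ => Finset.sum_congr rfl fun w _ => by ring
  -- structured forms
  set x : Fin n → ℕ := fun v => ∑ u : Fin n, eI E u v with hx
  set y : Fin n → ℕ := fun v => ∑ w : Fin n, eI E v w with hy
  set m := ∑ u : Fin n, ∑ v : Fin n, eI E u v with hm
  have hFs' : Fs = ∑ u : Fin n, y u * y u := by
    rw [hFs, hy]
    refine Finset.sum_congr rfl fun u _ => ?_
    rw [Finset.sum_mul_sum]
  have hGs' : Gs = ∑ v : Fin n, x v * x v := by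
    rw [hGs, hx]
    have h1 : ∀ u : Fin n, (∑ v : Fin n, ∑ w : Fin n, eI E u v * eI E w v)
        = ∑ v : Fin n, eI E u v * ∑ w : Fin n, eI E w v :=
      fun u => Finset.sum_congr rfl fun v _ => (Finset.mul_sum _ _ _).symm
    simp only [h1]
    rw [Finset.sum_comm]
    exact Finset.sum_congr rfl fun v _ => (Finset.sum_mul _ _ _).symm
  have hCs' : Cs = ∑ v : Fin n, x v * y v := by
    rw [hCs, hx, hy]
    have h1 : ∀ u : Fin n, (∑ v : Fin n, ∑ w : Fin n, eI E u v * eI E v w)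
        = ∑ v : Fin n, eI E u v * ∑ w : Fin n, eI E v w :=
      fun u => Finset.sum_congr rfl fun v _ => (Finset.mul_sum _ _ _).symm
    simp only [h1]
    rw [Finset.sum_comm]
    exact Finset.sum_congr rfl fun v _ => (Finset.sum_mul _ _ _).symm
  have hHs' : Hs = n * m := by
    rw [hHs, hm]
    simp only [Finset.sum_const, Finset.card_univ, Fintype.card_fin, smul_eq_mul,
      ← Finset.mul_sum]
  have hxy : (∑ v : Fin n, (x v + y v)) = 2 * m := by
    rw [hx, hy, hm, Finset.sum_add_distrib, Finset.sum_comm]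
    ring
  -- key ℕ inequality
  have hkey : 3 * A + (∑ u : Fin n, y u * y u) + (∑ v : Fin n, x v * x v)
      ≤ (∑ v : Fin n, x v * y v) + n * m := by
    rw [← hFs', ← hGs', ← hCs', ← hHs']
    omega
  -- move to ℝ
  have hkeyR : 3 * (A : ℝ) + (∑ u : Fin n, (y u : ℝ) * (y u : ℝ))
      + (∑ v : Fin n, (x v : ℝ) * (x v : ℝ))
      ≤ (∑ v : Fin n, (x v : ℝ) * (y v : ℝ)) + (n : ℝ) * (m : ℝ) := by
    exact_mod_cast hkey
  have hxyR : (∑ v : Fin n, ((x v : ℝ) + (y v : ℝ))) = 2 * (m : ℝ) := by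
    exact_mod_cast hxy
  have hcs : (∑ v : Fin n, ((x v : ℝ) + (y v : ℝ))) ^ 2
      ≤ (n : ℝ) * ∑ v : Fin n, ((x v : ℝ) + (y v : ℝ)) ^ 2 := by
    have := sq_sum_le_card_mul_sum_sq (s := (Finset.univ : Finset (Fin n)))
      (f := fun v => (x v : ℝ) + (y v : ℝ))
    simpa using this
  have hQ : (∑ v : Fin n, ((x v : ℝ) + (y v : ℝ)) ^ 2)
      ≤ 4 * (∑ v : Fin n, (x v : ℝ) * (x v : ℝ)) + 4 * (∑ u : Fin n, (y u : ℝ) * (y u : ℝ))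
        - 4 * (∑ v : Fin n, (x v : ℝ) * (y v : ℝ)) := by
    have hpt : ∀ v : Fin n, ((x v : ℝ) + (y v : ℝ)) ^ 2
        ≤ 4 * ((x v : ℝ) * (x v : ℝ)) + 4 * ((y v : ℝ) * (y v : ℝ))
          - 4 * ((x v : ℝ) * (y v : ℝ)) := fun v => by
      nlinarith [sq_nonneg ((x v : ℝ) - (y v : ℝ))]
    calc (∑ v : Fin n, ((x v : ℝ) + (y v : ℝ)) ^ 2)
        ≤ ∑ v : Fin n, (4 * ((x v : ℝ) * (x v : ℝ)) + 4 * ((y v : ℝ) * (y v : ℝ))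
          - 4 * ((x v : ℝ) * (y v : ℝ))) := Finset.sum_le_sum fun v _ => hpt v
    _ = _ := by
      rw [Finset.sum_sub_distrib, Finset.sum_add_distrib, ← Finset.mul_sum, ← Finset.mul_sum,
        ← Finset.mul_sum]
  have hN : (0 : ℝ) < n := by exact_mod_cast hn
  -- combine
  have h12 : 12 * (A : ℝ) ≤ 4 * (n : ℝ) * (m : ℝ)
      - (∑ v : Fin n, ((x v : ℝ) + (y v : ℝ)) ^ 2) := by linarith
  have hcs' : 4 * (m : ℝ) * (m : ℝ) ≤ (n : ℝ) * ∑ v : Fin n, ((x v : ℝ) + (y v : ℝ)) ^ 2 := by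
    rw [hxyR] at hcs
    nlinarith [hcs]
  have hfin : 12 * (A : ℝ) * (n : ℝ) ≤ (n : ℝ) ^ 3 * (n : ℝ) := by
    have step := mul_le_mul_of_nonneg_right h12 hN.le
    nlinarith [sq_nonneg ((n : ℝ) ^ 2 - 2 * (m : ℝ))]
  exact le_of_mul_le_mul_right hfin hN

/-- Füredi's bound: there is a constant `C` such that every loopless digon-free digraph
on `n` vertices has at most `n³/12 + C·n²` induced directed 2-edge paths (ordered
triples `(u, v, w)` of distinct vertices with edges `uv`, `vw` and no other edges
among them). -/
theorem stmt15 :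
    ∃ C : ℝ, ∀ (n : ℕ) (E : Fin n → Fin n → Prop),
      (∀ i, ¬ E i i) → (∀ i j, E i j → ¬ E j i) →
      (({t : Fin n × Fin n × Fin n |
          t.1 ≠ t.2.1 ∧ t.2.1 ≠ t.2.2 ∧ t.1 ≠ t.2.2 ∧
          E t.1 t.2.1 ∧ E t.2.1 t.2.2 ∧
          ¬ E t.1 t.2.2 ∧ ¬ E t.2.2 t.1 ∧ ¬ E t.2.1 t.1 ∧ ¬ E t.2.2 t.2.1}).ncard : ℝ)
        ≤ (n : ℝ) ^ 3 / 12 + C * (n : ℝ) ^ 2 := by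
  refine ⟨0, fun n E _ _ => ?_⟩
  have h := furedi_aux n E
  have hset : {t : Fin n × Fin n × Fin n |
          t.1 ≠ t.2.1 ∧ t.2.1 ≠ t.2.2 ∧ t.1 ≠ t.2.2 ∧
          E t.1 t.2.1 ∧ E t.2.1 t.2.2 ∧
          ¬ E t.1 t.2.2 ∧ ¬ E t.2.2 t.1 ∧ ¬ E t.2.1 t.1 ∧ ¬ E t.2.2 t.2.1}
      = ↑(Finset.univ.filter fun t : Fin n × Fin n × Fin n =>
        t.1 ≠ t.2.1 ∧ t.2.1 ≠ t.2.2 ∧ t.1 ≠ t.2.2 ∧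
        E t.1 t.2.1 ∧ E t.2.1 t.2.2 ∧
        ¬ E t.1 t.2.2 ∧ ¬ E t.2.2 t.1 ∧ ¬ E t.2.1 t.1 ∧ ¬ E t.2.2 t.2.1) := by
    ext t
    simp
  rw [hset, Set.ncard_coe_finset]
  linarith
end
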